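/- (Transformation of the spurious drift, Eq. (83)) For every x ∈ U, with y = φ(x): (1/√(det g'(y))) ∂_{y^b} ( √(det g') L'^{ab} )(y) = (∂φ^a/∂x^i)(x) · (1/√(det g(x))) ∂_{x^j} ( √(det g) L^{ij} )(x) + (∂²φ^a/∂x^i ∂x^j)(x) · B^{ij}(x), for each index a, where B^{ij} = ½(L^{ij} + L^{ji}). -/

import Mathlib

open Real

/-- Partial derivative `∂_k f` of a scalar field on `ℝ^d`, at a point. -/
noncomputable def pd {d : ℕ} (f : (Fin d → ℝ) → ℝ) (k : Fin d) (x : Fin d → ℝ) : ℝ :=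
  fderiv ℝ f x (Pi.single k 1)

/-- Second partial derivative `∂_i ∂_j f` of a scalar field on `ℝ^d`, at a point. -/
noncomputable def pd2 {d : ℕ} (f : (Fin d → ℝ) → ℝ) (i j : Fin d) (x : Fin d → ℝ) : ℝ :=
  pd (fun y => pd f j y) i x

/-- The transformed (covariant) metric
`g'_{ab}(y) = (∂ψ^i/∂y^a) g_{ij}(ψ(y)) (∂ψ^j/∂y^b)`. -/
noncomputable def metricP (d : ℕ) (ψ : (Fin d → ℝ) → (Fin d → ℝ))
    (g : (Fin d → ℝ) → Matrix (Fin d) (Fin d) ℝ)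
    (y : Fin d → ℝ) : Matrix (Fin d) (Fin d) ℝ :=
  Matrix.of fun a b => ∑ i, ∑ j,
    pd (fun z => ψ z i) a y * g (ψ y) i j * pd (fun z => ψ z j) b y

/-- The transformed (contravariant) tensor
`L'^{ab}(y) = (∂φ^a/∂x^i)(ψ(y)) L^{ij}(ψ(y)) (∂φ^b/∂x^j)(ψ(y))`. -/
noncomputable def tensorP (d : ℕ) (φ ψ : (Fin d → ℝ) → (Fin d → ℝ))
    (L : (Fin d → ℝ) → Matrix (Fin d) (Fin d) ℝ)
    (y : Fin d → ℝ) : Matrix (Fin d) (Fin d) ℝ :=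
  Matrix.of fun a b => ∑ i, ∑ j,
    pd (fun z => φ z a) i (ψ y) * L (ψ y) i j * pd (fun z => φ z b) j (ψ y)

open Matrix

section Base
variable {d : ℕ}

theorem pd_congr {f h : (Fin d → ℝ) → ℝ} {x : Fin d → ℝ} (hfh : f =ᶠ[nhds x] h) (k : Fin d) :
    pd f k x = pd h k x := by
  unfold pd; rw [hfh.fderiv_eq]

theorem fderiv_apply_sum {f : (Fin d → ℝ) → ℝ} {x : Fin d → ℝ} (w : Fin d → ℝ) :
    fderiv ℝ f x w = ∑ k, w k * pd f k x := by
  have hw : w = ∑ k, w k • (Pi.single k (1:ℝ) : Fin d → ℝ) := by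
    funext j
    rw [Finset.sum_apply]
    simp [Pi.single_apply]
  conv_lhs => rw [hw]
  rw [map_sum]
  refine Finset.sum_congr rfl fun k _ => ?_
  rw [_root_.map_smul]
  rfl

theorem pd_sum {ι : Type*} (u : Finset ι) {F : ι → (Fin d → ℝ) → ℝ} {x : Fin d → ℝ}
    (h : ∀ i ∈ u, DifferentiableAt ℝ (F i) x) (k : Fin d) :
    pd (fun z => ∑ i ∈ u, F i z) k x = ∑ i ∈ u, pd (F i) k x := by
  unfold pd
  rw [fderiv_fun_sum h]
  simp

theorem pd_mul {f h : (Fin d → ℝ) → ℝ} {x : Fin d → ℝ}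
    (hf : DifferentiableAt ℝ f x) (hh : DifferentiableAt ℝ h x) (k : Fin d) :
    pd (fun z => f z * h z) k x = pd f k x * h x + f x * pd h k x := by
  unfold pd
  rw [fderiv_fun_mul hf hh]
  simp [smul_eq_mul]
  ring

theorem pd_const_mul {h : (Fin d → ℝ) → ℝ} {x : Fin d → ℝ}
    (hh : DifferentiableAt ℝ h x) (c : ℝ) (k : Fin d) :
    pd (fun z => c * h z) k x = c * pd h k x := by
  unfold pd
  rw [fderiv_const_mul hh]
  simp

theorem pd_comp {f : (Fin d → ℝ) → ℝ} {ψ : (Fin d → ℝ) → (Fin d → ℝ)} {y : Fin d → ℝ}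
    (hf : DifferentiableAt ℝ f (ψ y)) (hψ : DifferentiableAt ℝ ψ y) (b : Fin d) :
    pd (fun z => f (ψ z)) b y = ∑ k, pd (fun z => ψ z k) b y * pd f k (ψ y) := by
  have h1 : fderiv ℝ (f ∘ ψ) y = (fderiv ℝ f (ψ y)).comp (fderiv ℝ ψ y) := fderiv_comp y hf hψ
  have h2 : pd (fun z => f (ψ z)) b y = fderiv ℝ f (ψ y) (fderiv ℝ ψ y (Pi.single b 1)) := by
    rw [show (fun z => f (ψ z)) = f ∘ ψ from rfl, pd, h1]; rfl
  rw [h2, fderiv_apply_sum]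
  refine Finset.sum_congr rfl fun k _ => ?_
  congr 1
  have hcomp : ∀ i, DifferentiableAt ℝ (fun z => ψ z i) y := by
    intro i
    exact (ContinuousLinearMap.proj i : ((Fin d → ℝ) →L[ℝ] ℝ)).differentiableAt.comp y hψ
  have : fderiv ℝ ψ y = ContinuousLinearMap.pi (fun i => fderiv ℝ (fun z => ψ z i) y) := by
    exact fderiv_pi hcomp
  rw [this]
  rfl

theorem pd_coord (p q : Fin d) (y : Fin d → ℝ) :
    pd (fun z : Fin d → ℝ => z p) q y = if p = q then 1 else 0 := by
  have : pd (fun z : Fin d → ℝ => z p) q y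
      = (ContinuousLinearMap.proj p : ((Fin d → ℝ) →L[ℝ] ℝ)) (Pi.single q 1) := by
    unfold pd
    rw [show (fun z : Fin d → ℝ => z p) = ⇑(ContinuousLinearMap.proj p (R := ℝ) (φ := fun _ : Fin d => ℝ)) from rfl,
      (ContinuousLinearMap.proj p : ((Fin d → ℝ) →L[ℝ] ℝ)).fderiv]
  rw [this]
  simp [Pi.single_apply]

theorem pd2_symm {f : (Fin d → ℝ) → ℝ} {x : Fin d → ℝ} (hf : ContDiffAt ℝ 2 f x) (i j : Fin d) :
    pd2 f i j x = pd2 f j i x := by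
  have hd1 : DifferentiableAt ℝ (fderiv ℝ f) x :=
    (hf.fderiv_right (m := 1) (by norm_num)).differentiableAt one_ne_zero
  have key : ∀ v w : Fin d → ℝ,
      fderiv ℝ (fun y => fderiv ℝ f y w) x v = fderiv ℝ (fderiv ℝ f) x v w := by
    intro v w
    rw [fderiv_clm_apply hd1 (differentiableAt_const w)]
    simp
  have hsymm := hf.isSymmSndFDerivAt (by simp [minSmoothness_of_isRCLikeNormedField])
  unfold pd2 pd
  rw [key, key, hsymm.eq]
section Plumb
variable {d : ℕ}

theorem diffAt_of_contDiffOn {n : WithTop ℕ∞} {f : (Fin d → ℝ) → ℝ} {U : Set (Fin d → ℝ)}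
    (hU : IsOpen U) (hf : ContDiffOn ℝ n f U) (hn : 1 ≤ n) {x : Fin d → ℝ} (hx : x ∈ U) :
    DifferentiableAt ℝ f x :=
  ((hf.differentiableOn (zero_lt_one.trans_le hn).ne') x hx).differentiableAt (hU.mem_nhds hx)

theorem diffAt_of_contDiffOn' {n : WithTop ℕ∞} {f : (Fin d → ℝ) → (Fin d → ℝ)}
    {U : Set (Fin d → ℝ)}
    (hU : IsOpen U) (hf : ContDiffOn ℝ n f U) (hn : 1 ≤ n) {x : Fin d → ℝ} (hx : x ∈ U) :
    DifferentiableAt ℝ f x :=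
  ((hf.differentiableOn (zero_lt_one.trans_le hn).ne') x hx).differentiableAt (hU.mem_nhds hx)

theorem contDiffOn_pd {n : ℕ} {f : (Fin d → ℝ) → ℝ} {U : Set (Fin d → ℝ)} (hU : IsOpen U)
    (hf : ContDiffOn ℝ (n+1 : ℕ) f U) (k : Fin d) : ContDiffOn ℝ (n : ℕ) (pd f k) U := by
  have h1 : ContDiffOn ℝ (n : ℕ) (fun x => fderiv ℝ f x) U := by
    apply hf.fderiv_of_isOpen hU
    norm_cast
  exact h1.clm_apply contDiffOn_const

theorem contDiffOn_comp_component {n : WithTop ℕ∞} {f : (Fin d → ℝ) → (Fin d → ℝ)}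
    {U : Set (Fin d → ℝ)} (hf : ContDiffOn ℝ n f U) (p : Fin d) :
    ContDiffOn ℝ n (fun x => f x p) U :=
  (contDiffOn_pi.mp hf) p

end Plumb

noncomputable def Kmat {d : ℕ} (ψ : (Fin d → ℝ) → (Fin d → ℝ)) (y : Fin d → ℝ) :
    Matrix (Fin d) (Fin d) ℝ :=
  Matrix.of fun p q => pd (fun z => ψ z p) q y

section Mat
variable {d : ℕ} {φ ψ : (Fin d → ℝ) → (Fin d → ℝ)} {U V : Set (Fin d → ℝ)}

theorem metricP_eq (g : (Fin d → ℝ) → Matrix (Fin d) (Fin d) ℝ) (y : Fin d → ℝ) :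
    metricP d ψ g y = (Kmat ψ y)ᵀ * g (ψ y) * Kmat ψ y := by
  ext a b
  simp only [metricP, Kmat, Matrix.mul_apply, Matrix.transpose_apply, Matrix.of_apply,
    Finset.sum_mul]
  rw [Finset.sum_comm]

theorem det_metricP (g : (Fin d → ℝ) → Matrix (Fin d) (Fin d) ℝ) (y : Fin d → ℝ) :
    (metricP d ψ g y).det = (Kmat ψ y).det ^ 2 * (g (ψ y)).det := by
  rw [metricP_eq, Matrix.det_mul, Matrix.det_mul, Matrix.det_transpose]
  ring

theorem KJ_one (hV : IsOpen V) (hU : IsOpen U) (hψU : Set.MapsTo ψ V U)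
    (hφψ : ∀ y ∈ V, φ (ψ y) = y) (hφ : ContDiffOn ℝ 3 φ U) (hψ : ContDiffOn ℝ 3 ψ V)
    {y : Fin d → ℝ} (hy : y ∈ V) : Kmat φ (ψ y) * Kmat ψ y = 1 := by
  ext p q
  rw [Matrix.mul_apply, Matrix.one_apply]
  have hcomp : pd (fun z => φ (ψ z) p) q y
      = ∑ k, pd (fun z => ψ z k) q y * pd (fun x => φ x p) k (ψ y) :=
    pd_comp (diffAt_of_contDiffOn hU (contDiffOn_comp_component hφ p) (by norm_num) (hψU hy))
      (diffAt_of_contDiffOn' hV hψ (by norm_num) hy) q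
  have hid : pd (fun z => φ (ψ z) p) q y = pd (fun z : Fin d → ℝ => z p) q y := by
    apply pd_congr
    filter_upwards [hV.mem_nhds hy] with z hz
    rw [hφψ z hz]
  rw [show (Kmat φ (ψ y) : Matrix (Fin d) (Fin d) ℝ) = Matrix.of fun p q => pd (fun z => φ z p) q (ψ y) from rfl]
  calc ∑ k, (Matrix.of fun p q => pd (fun z => φ z p) q (ψ y)) p k * Kmat ψ y k q
      = ∑ k, pd (fun z => ψ z k) q y * pd (fun x => φ x p) k (ψ y) := by
        refine Finset.sum_congr rfl fun k _ => ?_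
        simp only [Kmat, Matrix.of_apply]
        ring
    _ = pd (fun z : Fin d → ℝ => z p) q y := by rw [← hcomp, hid]
    _ = if p = q then 1 else 0 := pd_coord p q y
section Jac
variable {d : ℕ} {φ ψ : (Fin d → ℝ) → (Fin d → ℝ)} {U V : Set (Fin d → ℝ)}

theorem pd_prod {ι : Type*} [DecidableEq ι] (u : Finset ι) {F : ι → (Fin d → ℝ) → ℝ}
    {x : Fin d → ℝ} (h : ∀ i ∈ u, DifferentiableAt ℝ (F i) x) (k : Fin d) :
    pd (fun z => ∏ i ∈ u, F i z) k x = ∑ i ∈ u, pd (F i) k x * ∏ j ∈ u.erase i, F j x := by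
  have hh := HasFDerivAt.finset_prod (u := u) (g := F) (g' := fun i => fderiv ℝ (F i) x)
    (fun i hi => (h i hi).hasFDerivAt)
  unfold pd
  rw [hh.fderiv]
  rw [ContinuousLinearMap.sum_apply]
  exact Finset.sum_congr rfl fun i hi => by rw [ContinuousLinearMap.smul_apply]; simp [mul_comm]

theorem det_updateColumn_expand (M : Matrix (Fin d) (Fin d) ℝ) (p : Fin d) (v : Fin d → ℝ) :
    (M.updateCol p v).det
      = ∑ σ : Equiv.Perm (Fin d), (Equiv.Perm.sign σ : ℝ) *
          (v (σ p) * ∏ i ∈ Finset.univ.erase p, M (σ i) i) := by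
  rw [Matrix.det_apply']
  refine Finset.sum_congr rfl fun σ _ => ?_
  congr 1
  rw [← Finset.mul_prod_erase Finset.univ _ (Finset.mem_univ p)]
  rw [Matrix.updateCol_apply, if_pos rfl]
  congr 1
  refine Finset.prod_congr rfl fun i hi => ?_
  rw [Matrix.updateCol_apply, if_neg (Finset.ne_of_mem_erase hi)]

theorem det_updateColumn_inv {K J : Matrix (Fin d) (Fin d) ℝ} (hKJ : K * J = 1)
    (p : Fin d) (v : Fin d → ℝ) :
    (K.updateCol p v).det = (∑ r, J p r * v r) * K.det := by
  have hv : v = fun k => ∑ m, (∑ r, J m r * v r) • K k m := by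
    funext k
    simp only [smul_eq_mul]
    have : ∑ m, (∑ r, J m r * v r) * K k m = ∑ r, (∑ m, K k m * J m r) * v r := by
      rw [Finset.sum_congr rfl fun m (_ : m ∈ Finset.univ) =>
        (Finset.sum_mul Finset.univ (fun r => J m r * v r) (K k m))]
      rw [Finset.sum_comm]
      refine Finset.sum_congr rfl fun r _ => ?_
      rw [Finset.sum_mul]
      exact Finset.sum_congr rfl fun m _ => by ring
    rw [this]
    have hone : ∀ r, (∑ m, K k m * J m r) = if k = r then 1 else 0 := by
      intro r
      have := congrArg (fun A => A k r) hKJ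
      simpa [Matrix.mul_apply, Matrix.one_apply] using this
    rw [Finset.sum_congr rfl fun r _ => by rw [hone r]]
    simp
  conv_lhs => rw [hv]
  rw [Matrix.det_updateCol_sum K p (fun m => ∑ r, J m r * v r)]
  simp [smul_eq_mul]

theorem pd_det_K (hV : IsOpen V) (hψ : ContDiffOn ℝ 3 ψ V) {y : Fin d → ℝ} (hy : y ∈ V)
    (b : Fin d) :
    pd (fun z => (Kmat ψ z).det) b y
      = ∑ p, ((Kmat ψ y).updateCol p
          (fun r => pd2 (fun z => ψ z r) b p y)).det := by
  have hent : ∀ p q, ContDiffOn ℝ (2:ℕ) (pd (fun z => ψ z p) q) V := by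
    intro p q
    refine contDiffOn_pd hV ?_ q
    exact_mod_cast contDiffOn_comp_component hψ p
  have hdent : ∀ p q {z}, z ∈ V → DifferentiableAt ℝ (pd (fun z => ψ z p) q) z := by
    intro p q z hz
    exact diffAt_of_contDiffOn hV (hent p q) (by norm_num) hz
  have hfun : (fun z => (Kmat ψ z).det)
      = fun z => ∑ σ : Equiv.Perm (Fin d), (Equiv.Perm.sign σ : ℝ) *
          ∏ i, pd (fun w => ψ w (σ i)) i z := by
    funext z
    rw [Matrix.det_apply']
    rfl
  rw [hfun]
  have hproddiff : ∀ σ : Equiv.Perm (Fin d),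
      DifferentiableAt ℝ (fun z => ∏ i, pd (fun w => ψ w (σ i)) i z) y := by
    intro σ
    exact (HasFDerivAt.finset_prod
      (fun i (_ : i ∈ Finset.univ) => (hdent (σ i) i hy).hasFDerivAt)).differentiableAt
  rw [pd_sum Finset.univ (fun σ _ => (hproddiff σ).const_mul _) b]
  have hterm : ∀ σ : Equiv.Perm (Fin d),
      pd (fun z => (Equiv.Perm.sign σ : ℝ) * ∏ i, pd (fun w => ψ w (σ i)) i z) b y
      = (Equiv.Perm.sign σ : ℝ) * ∑ p, pd2 (fun w => ψ w (σ p)) b p y *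
          ∏ i ∈ Finset.univ.erase p, pd (fun w => ψ w (σ i)) i y := by
    intro σ
    rw [pd_const_mul (hproddiff σ)]
    congr 1
    rw [pd_prod Finset.univ (fun i _ => hdent (σ i) i hy) b]
    rfl
  rw [Finset.sum_congr rfl fun σ _ => hterm σ]
  rw [Finset.sum_congr rfl fun p (_ : p ∈ Finset.univ) =>
    det_updateColumn_expand (Kmat ψ y) p (fun r => pd2 (fun z => ψ z r) b p y)]
  rw [Finset.sum_comm]
  refine Finset.sum_congr rfl fun σ _ => ?_
  rw [Finset.mul_sum]
  refine Finset.sum_congr rfl fun p _ => ?_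
  show (Equiv.Perm.sign σ : ℝ) * (pd2 (fun w => ψ w (σ p)) b p y * _) = _
  have hK : ∀ i : Fin d, Kmat ψ y (σ i) i = pd (fun w => ψ w (σ i)) i y := fun i => rfl
  rw [Finset.prod_congr rfl fun i (_ : i ∈ Finset.univ.erase p) => hK i]
section Piola
variable {d : ℕ} {φ ψ : (Fin d → ℝ) → (Fin d → ℝ)} {U V : Set (Fin d → ℝ)}

theorem pd_const (c : ℝ) (k : Fin d) (x : Fin d → ℝ) : pd (fun _ => c) k x = 0 := by
  unfold pd
  simp

theorem sum3_213 (f : Fin d → Fin d → Fin d → ℝ) :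
    ∑ a, ∑ b, ∑ c, f a b c = ∑ b, ∑ a, ∑ c, f a b c := Finset.sum_comm

theorem sum3_132 (f : Fin d → Fin d → Fin d → ℝ) :
    ∑ a, ∑ b, ∑ c, f a b c = ∑ a, ∑ c, ∑ b, f a b c :=
  Finset.sum_congr rfl fun _ _ => Finset.sum_comm

theorem sum3_321 (f : Fin d → Fin d → Fin d → ℝ) :
    ∑ a, ∑ b, ∑ c, f a b c = ∑ c, ∑ b, ∑ a, f a b c :=
  calc ∑ a, ∑ b, ∑ c, f a b c
      = ∑ a, ∑ c, ∑ b, f a b c := sum3_132 f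
    _ = ∑ c, ∑ a, ∑ b, f a b c := sum3_213 (fun a c b => f a b c)
    _ = ∑ c, ∑ b, ∑ a, f a b c := sum3_132 (fun c a b => f a b c)

theorem diff_detK (hV : IsOpen V) (hψ : ContDiffOn ℝ 3 ψ V) {y : Fin d → ℝ} (hy : y ∈ V) :
    DifferentiableAt ℝ (fun z => (Kmat ψ z).det) y := by
  have hdent : ∀ p q, DifferentiableAt ℝ (pd (fun z => ψ z p) q) y := by
    intro p q
    refine diffAt_of_contDiffOn hV (contDiffOn_pd (n := 2) hV ?_ q) (by norm_num) hy
    exact_mod_cast contDiffOn_comp_component hψ p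
  have hfun : (fun z => (Kmat ψ z).det)
      = fun z => ∑ σ : Equiv.Perm (Fin d), (Equiv.Perm.sign σ : ℝ) *
          ∏ i, pd (fun w => ψ w (σ i)) i z := by
    funext z
    rw [Matrix.det_apply']
    rfl
  rw [hfun]
  refine DifferentiableAt.fun_sum fun σ _ => DifferentiableAt.const_mul ?_ _
  exact (HasFDerivAt.finset_prod
    (fun i (_ : i ∈ Finset.univ) => (hdent (σ i) i).hasFDerivAt)).differentiableAt

theorem diff_c (hV : IsOpen V) (hU : IsOpen U) (hψU : Set.MapsTo ψ V U)
    (hφ : ContDiffOn ℝ 3 φ U) (hψ : ContDiffOn ℝ 3 ψ V)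
    {y : Fin d → ℝ} (hy : y ∈ V) (p m : Fin d) :
    DifferentiableAt ℝ (fun y => Kmat φ (ψ y) p m) y := by
  have houter : DifferentiableAt ℝ (pd (fun z => φ z p) m) (ψ y) := by
    refine diffAt_of_contDiffOn hU (contDiffOn_pd (n := 2) hU ?_ m) (by norm_num) (hψU hy)
    exact_mod_cast contDiffOn_comp_component hφ p
  exact DifferentiableAt.comp y houter (diffAt_of_contDiffOn' hV hψ (by norm_num) hy)

theorem pd_c (hV : IsOpen V) (hU : IsOpen U) (hψU : Set.MapsTo ψ V U)
    (hφ : ContDiffOn ℝ 3 φ U) (hψ : ContDiffOn ℝ 3 ψ V)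
    {y : Fin d → ℝ} (hy : y ∈ V) (p m b : Fin d) :
    pd (fun y => Kmat φ (ψ y) p m) b y
      = ∑ k, Kmat ψ y k b * pd2 (fun z => φ z p) k m (ψ y) := by
  have houter : DifferentiableAt ℝ (pd (fun z => φ z p) m) (ψ y) := by
    refine diffAt_of_contDiffOn hU (contDiffOn_pd (n := 2) hU ?_ m) (by norm_num) (hψU hy)
    exact_mod_cast contDiffOn_comp_component hφ p
  have := pd_comp (f := pd (fun z => φ z p) m) houter
    (diffAt_of_contDiffOn' hV hψ (by norm_num) hy) b
  rw [show (fun y => Kmat φ (ψ y) p m) = (fun z => pd (fun w => φ w p) m (ψ z)) from rfl, this]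
  rfl

theorem piola (hV : IsOpen V) (hU : IsOpen U) (hψU : Set.MapsTo ψ V U)
    (hφV : Set.MapsTo φ U V)
    (hφψ : ∀ y ∈ V, φ (ψ y) = y) (hψφ : ∀ x ∈ U, ψ (φ x) = x)
    (hφ : ContDiffOn ℝ 3 φ U) (hψ : ContDiffOn ℝ 3 ψ V)
    {y₀ : Fin d → ℝ} (hy : y₀ ∈ V) (j : Fin d) :
    ∑ b, pd (fun y => (Kmat ψ y).det * Kmat φ (ψ y) b j) b y₀ = 0 := by
  set x₀ := ψ y₀ with hx₀
  have hxU : x₀ ∈ U := hψU hy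
  set K0 : Matrix (Fin d) (Fin d) ℝ := Kmat ψ y₀ with hK0
  set J0 : Matrix (Fin d) (Fin d) ℝ := Kmat φ x₀ with hJ0
  have hKJ : K0 * J0 = 1 := by
    have := KJ_one (φ := ψ) (ψ := φ) hU hV hφV hψφ hψ hφ hxU
    rwa [show φ x₀ = y₀ from hφψ y₀ hy] at this
  set S : Fin d → Fin d → Fin d → ℝ :=
    fun m b q => pd2 (fun z => ψ z m) b q y₀ with hS
  set T : Fin d → Fin d → Fin d → ℝ :=
    fun p k m => pd2 (fun z => φ z p) k m x₀ with hT
  have hdent : ∀ p q, DifferentiableAt ℝ (pd (fun z => ψ z p) q) y₀ := by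
    intro p q
    refine diffAt_of_contDiffOn hV (contDiffOn_pd (n := 2) hV ?_ q) (by norm_num) hy
    exact_mod_cast contDiffOn_comp_component hψ p
  -- Step A : compute each summand
  have stepA : ∀ b, pd (fun y => (Kmat ψ y).det * Kmat φ (ψ y) b j) b y₀
      = K0.det * ((∑ p, ∑ r, J0 p r * S r b p) * J0 b j
          + ∑ k, K0 k b * T b k j) := by
    intro b
    rw [pd_mul (diff_detK hV hψ hy) (diff_c hV hU hψU hφ hψ hy b j) b]
    rw [pd_det_K hV hψ hy b]
    rw [pd_c hV hU hψU hφ hψ hy b j b]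
    rw [Finset.sum_congr rfl fun p (_ : p ∈ Finset.univ) =>
      det_updateColumn_inv hKJ p (fun r => pd2 (fun z => ψ z r) b p y₀)]
    have h1 : ∑ p, (∑ r, J0 p r * pd2 (fun z => ψ z r) b p y₀) * K0.det
        = K0.det * ∑ p, ∑ r, J0 p r * S r b p := by
      rw [Finset.mul_sum]
      exact Finset.sum_congr rfl fun p _ => by rw [hS]; ring
    rw [h1]
    ring
  rw [Finset.sum_congr rfl fun b (_ : b ∈ Finset.univ) => stepA b]
  rw [← Finset.mul_sum]
  -- Step B : differentiate J(y) K(y) = 1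
  have stepB : ∀ b q : Fin d,
      ∑ m, (∑ k, K0 k b * T b k m) * K0 m q = - ∑ m, J0 b m * S m b q := by
    intro b q
    have hconst : pd (fun y => ∑ m, Kmat φ (ψ y) b m * Kmat ψ y m q) b y₀ = 0 := by
      have heq : (fun y => ∑ m, Kmat φ (ψ y) b m * Kmat ψ y m q)
          =ᶠ[nhds y₀] (fun _ => (1 : Matrix (Fin d) (Fin d) ℝ) b q) := by
        filter_upwards [hV.mem_nhds hy] with z hz
        have h2 := congrArg (fun A => A b q) (KJ_one hV hU hψU hφψ hφ hψ hz)
        simpa [Matrix.mul_apply] using h2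
      rw [pd_congr heq b, pd_const]
    have hexp : pd (fun y => ∑ m, Kmat φ (ψ y) b m * Kmat ψ y m q) b y₀
        = ∑ m, ((∑ k, K0 k b * T b k m) * K0 m q + J0 b m * S m b q) := by
      have hdiff : ∀ m ∈ Finset.univ,
          DifferentiableAt ℝ (fun y => Kmat φ (ψ y) b m * Kmat ψ y m q) y₀ :=
        fun m _ => ((diff_c hV hU hψU hφ hψ hy b m).mul (hdent m q))
      rw [pd_sum Finset.univ hdiff b]
      refine Finset.sum_congr rfl fun m _ => ?_
      rw [pd_mul (diff_c hV hU hψU hφ hψ hy b m)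
        (show DifferentiableAt ℝ (fun y => Kmat ψ y m q) y₀ from hdent m q) b]
      rw [pd_c hV hU hψU hφ hψ hy b m b]
      rfl
    rw [hexp, Finset.sum_add_distrib] at hconst
    linarith [hconst]
  -- Step C : algebra
  have hSsym : ∀ m b q, S m b q = S m q b := by
    intro m b q
    refine pd2_symm ?_ b q
    exact ((contDiffOn_comp_component hψ m).contDiffAt (hV.mem_nhds hy)).of_le (by norm_num)
  have hdelta : ∀ m : Fin d, (∑ q, K0 m q * J0 q j) = if m = j then 1 else 0 := by
    intro m
    have h3 := congrArg (fun A => A m j) hKJ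
    simpa [Matrix.mul_apply, Matrix.one_apply] using h3
  set X : ℝ := ∑ b, ∑ q, ∑ m, J0 b m * S m b q * J0 q j with hX
  have E1 : ∑ b, (∑ p, ∑ r, J0 p r * S r b p) * J0 b j = X := by
    have e0 : ∀ b, (∑ p, ∑ r, J0 p r * S r b p) * J0 b j
        = ∑ p, ∑ r, J0 p r * S r b p * J0 b j := by
      intro b
      rw [Finset.sum_mul]
      exact Finset.sum_congr rfl fun p _ => by
        rw [Finset.sum_mul]
    rw [Finset.sum_congr rfl fun b (_ : b ∈ Finset.univ) => e0 b]
    rw [sum3_213 (fun b p r => J0 p r * S r b p * J0 b j)]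
    rw [hX]
    refine Finset.sum_congr rfl fun b _ => Finset.sum_congr rfl fun q _ =>
      Finset.sum_congr rfl fun m _ => ?_
    rw [hSsym m q b]
  have E2 : ∑ b, ∑ k, K0 k b * T b k j = - X := by
    have e3 : ∀ b, ∑ k, K0 k b * T b k j
        = - ∑ q, ∑ m, J0 b m * S m b q * J0 q j := by
      intro b
      have c1 : ∑ k, K0 k b * T b k j
          = ∑ k, ∑ m, ∑ q, K0 k b * T b k m * K0 m q * J0 q j := by
        refine Finset.sum_congr rfl fun k _ => ?_
        have : T b k j = ∑ m, T b k m * ∑ q, K0 m q * J0 q j := by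
          rw [Finset.sum_congr rfl fun m (_ : m ∈ Finset.univ) => by rw [hdelta m]]
          simp
        rw [this, Finset.mul_sum]
        refine Finset.sum_congr rfl fun m _ => ?_
        rw [Finset.mul_sum, Finset.mul_sum]
        exact Finset.sum_congr rfl fun q _ => by ring
      have c2 : ∑ k, ∑ m, ∑ q, K0 k b * T b k m * K0 m q * J0 q j
          = ∑ q, (∑ m, (∑ k, K0 k b * T b k m) * K0 m q) * J0 q j := by
        rw [sum3_321 (fun k m q => K0 k b * T b k m * K0 m q * J0 q j)]
        refine Finset.sum_congr rfl fun q _ => ?_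
        rw [Finset.sum_mul]
        refine Finset.sum_congr rfl fun m _ => ?_
        rw [Finset.sum_mul, Finset.sum_mul]
      rw [c1, c2]
      rw [Finset.sum_congr rfl fun q (_ : q ∈ Finset.univ) => by rw [stepB b q]]
      rw [← Finset.sum_neg_distrib]
      refine Finset.sum_congr rfl fun q _ => ?_
      rw [neg_mul, Finset.sum_mul]
    rw [Finset.sum_congr rfl fun b (_ : b ∈ Finset.univ) => e3 b, hX,
      ← Finset.sum_neg_distrib]
  rw [Finset.sum_add_distrib, E1, E2]
  ring
end Piola

section MainAux
variable {d : ℕ}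

theorem diff_det_mat {M : (Fin d → ℝ) → Matrix (Fin d) (Fin d) ℝ} {x : Fin d → ℝ}
    (h : ∀ p q, DifferentiableAt ℝ (fun x => M x p q) x) :
    DifferentiableAt ℝ (fun x => (M x).det) x := by
  have hfun : (fun z => (M z).det)
      = fun z => ∑ σ : Equiv.Perm (Fin d), (Equiv.Perm.sign σ : ℝ) *
          ∏ i, M z (σ i) i := by
    funext z
    rw [Matrix.det_apply']
  rw [hfun]
  refine DifferentiableAt.fun_sum fun σ _ => DifferentiableAt.const_mul ?_ _
  exact (HasFDerivAt.finset_prod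
    (fun i (_ : i ∈ Finset.univ) => (h (σ i) i).hasFDerivAt)).differentiableAt

theorem sum_delta_mul (j : Fin d) (v : Fin d → ℝ) :
    ∑ k, (if k = j then (1:ℝ) else 0) * v k = v j := by
  simp

end MainAux


/-- transformation of the spurious drift, Eq. (83): for every
`x ∈ U`, with `y = φ(x)`,
`(1/√det g') ∂_{y^b}(√det g' L'^{ab})(y)
  = (∂φ^a/∂x^i)(x) (1/√det g) ∂_{x^j}(√det g L^{ij})(x)
    + (∂²φ^a/∂x^i∂x^j)(x) B^{ij}(x)` with `B^{ij} = ½(L^{ij} + L^{ji})`. -/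
theorem spurious_drift_transform (d : ℕ) (hd : 1 ≤ d)
    (U V : Set (Fin d → ℝ)) (hU : IsOpen U) (hV : IsOpen V)
    (φ ψ : (Fin d → ℝ) → (Fin d → ℝ))
    (hφV : Set.MapsTo φ U V) (hψU : Set.MapsTo ψ V U)
    (hψφ : ∀ x ∈ U, ψ (φ x) = x) (hφψ : ∀ y ∈ V, φ (ψ y) = y)
    (hφ : ContDiffOn ℝ 3 φ U) (hψ : ContDiffOn ℝ 3 ψ V)
    (g : (Fin d → ℝ) → Matrix (Fin d) (Fin d) ℝ)
    (hgsymm : ∀ x ∈ U, (g x).IsSymm) (hgpos : ∀ x ∈ U, (g x).PosDef)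
    (hgC1 : ∀ i j, ContDiffOn ℝ 1 (fun x => g x i j) U)
    (L : (Fin d → ℝ) → Matrix (Fin d) (Fin d) ℝ)
    (hLC1 : ∀ i j, ContDiffOn ℝ 1 (fun x => L x i j) U) :
    ∀ x ∈ U, ∀ a : Fin d,
      (Real.sqrt (metricP d ψ g (φ x)).det)⁻¹ *
        (∑ b, pd (fun y => Real.sqrt (metricP d ψ g y).det * tensorP d φ ψ L y a b)
          b (φ x)) =
      (∑ i, pd (fun z => φ z a) i x *
        ((Real.sqrt (g x).det)⁻¹ *
          ∑ j, pd (fun z => Real.sqrt (g z).det * L z i j) j x)) +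
      (∑ i, ∑ j, pd2 (fun z => φ z a) i j x * ((L x i j + L x j i) / 2)) := by
  intro x₀ hx a
  have hyV : φ x₀ ∈ V := hφV hx
  have hψy₀ : ψ (φ x₀) = x₀ := hψφ x₀ hx
  set y₀ := φ x₀ with hy₀def
  set m : (Fin d → ℝ) → ℝ := fun y => (Kmat ψ y).det with hm
  set Hf : Fin d → (Fin d → ℝ) → ℝ :=
    fun j x => ∑ i, Kmat φ x a i * (Real.sqrt (g x).det * L x i j) with hHfdef
  have hKJ : Kmat ψ y₀ * Kmat φ x₀ = 1 :=
    KJ_one (φ := ψ) (ψ := φ) hU hV hφV hψφ hψ hφ hx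
  have hJK : Kmat φ x₀ * Kmat ψ y₀ = 1 := by
    have := KJ_one hV hU hψU hφψ hφ hψ hyV
    rwa [hψy₀] at this
  have hm0 : m y₀ ≠ 0 := by
    intro h0
    have hdet := congrArg Matrix.det hKJ
    rw [Matrix.det_mul, Matrix.det_one] at hdet
    rw [show (Kmat ψ y₀).det = m y₀ from rfl, h0, zero_mul] at hdet
    norm_num at hdet
  -- sign
  set ε : ℝ := if 0 < m y₀ then 1 else -1 with hεdef
  have hεm : 0 < ε * m y₀ := by
    rcases lt_or_gt_of_ne hm0 with hlt | hgt
    · rw [hεdef, if_neg (by linarith)]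
      linarith
    · rw [hεdef, if_pos hgt]
      linarith
  have hεcases : ε = 1 ∨ ε = -1 := by
    rw [hεdef]; split <;> simp
  -- positivity of det g
  have hdgpos : ∀ z ∈ U, 0 < (g z).det := fun z hz => (hgpos z hz).det_pos
  -- sqrt of det metricP
  have hsq : ∀ y ∈ V, 0 < ε * m y →
      Real.sqrt (metricP d ψ g y).det = ε * m y * Real.sqrt ((g (ψ y)).det) := by
    intro y hyV' hpos
    rw [det_metricP]
    rw [Real.sqrt_mul (sq_nonneg _)]
    rw [Real.sqrt_sq_eq_abs]
    have habs : |(Kmat ψ y).det| = ε * m y := by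
      rcases hεcases with h1 | h1
      · rw [h1, one_mul] at hpos ⊢
        exact abs_of_pos hpos
      · rw [h1] at hpos ⊢
        have : m y < 0 := by linarith
        rw [abs_of_neg this]
        ring
    rw [habs]
  -- continuity / eventual positivity
  have hmc : ContinuousAt m y₀ := (diff_detK hV hψ hyV).continuousAt
  have hWev : ∀ᶠ y in nhds y₀, y ∈ V ∧ 0 < ε * m y := by
    have hc : ContinuousAt (fun y => ε * m y) y₀ := continuousAt_const.mul hmc
    filter_upwards [hV.mem_nhds hyV, hc.eventually (eventually_gt_nhds hεm)] with y h1 h2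
    exact ⟨h1, h2⟩
  -- differentiability basics
  have hdentψ : ∀ p q {z}, z ∈ V → DifferentiableAt ℝ (pd (fun w => ψ w p) q) z := by
    intro p q z hz
    refine diffAt_of_contDiffOn hV (contDiffOn_pd (n := 2) hV ?_ q) (by norm_num) hz
    exact_mod_cast contDiffOn_comp_component hψ p
  have hdentφ : ∀ p q {z}, z ∈ U → DifferentiableAt ℝ (pd (fun w => φ w p) q) z := by
    intro p q z hz
    refine diffAt_of_contDiffOn hU (contDiffOn_pd (n := 2) hU ?_ q) (by norm_num) hz
    exact_mod_cast contDiffOn_comp_component hφ p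
  have hdiffsqrtg : ∀ z ∈ U, DifferentiableAt ℝ (fun w => Real.sqrt (g w).det) z := by
    intro z hz
    have hdetg : DifferentiableAt ℝ (fun w => (g w).det) z :=
      diff_det_mat (fun p q => diffAt_of_contDiffOn hU (hgC1 p q) le_rfl hz)
    exact hdetg.sqrt (hdgpos z hz).ne'
  have hdiffH : ∀ j, DifferentiableAt ℝ (Hf j) x₀ := by
    intro j
    refine DifferentiableAt.fun_sum fun i _ => DifferentiableAt.mul ?_ ?_
    · exact hdentφ a i hx
    · exact (hdiffsqrtg x₀ hx).mul
        (diffAt_of_contDiffOn hU (hLC1 i j) le_rfl hx)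
  have hdiffψat : DifferentiableAt ℝ ψ y₀ := diffAt_of_contDiffOn' hV hψ (by norm_num) hyV
  have hdiffHψ : ∀ j, DifferentiableAt ℝ (fun y => Hf j (ψ y)) y₀ := by
    intro j
    have := (by rw [hψy₀]; exact hdiffH j : DifferentiableAt ℝ (Hf j) (ψ y₀))
    exact this.comp y₀ hdiffψat
  have hdiffm : DifferentiableAt ℝ m y₀ := diff_detK hV hψ hyV
  have hdiffc : ∀ b j, DifferentiableAt ℝ (fun y => Kmat φ (ψ y) b j) y₀ :=
    fun b j => diff_c hV hU hψU hφ hψ hyV b j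
  -- Step 1: replace the integrand by the factored form
  have step1 : ∀ b, pd (fun y => Real.sqrt (metricP d ψ g y).det * tensorP d φ ψ L y a b) b y₀
      = pd (fun y => ε * ∑ j, (m y * Kmat φ (ψ y) b j) * Hf j (ψ y)) b y₀ := by
    intro b
    refine pd_congr ?_ b
    filter_upwards [hWev] with y hy
    obtain ⟨hyV', hpos⟩ := hy
    rw [hsq y hyV' hpos]
    have ht : tensorP d φ ψ L y a b
        = ∑ i, ∑ j, Kmat φ (ψ y) a i * L (ψ y) i j * Kmat φ (ψ y) b j := rfl
    rw [ht]
    have hHfy : ∀ j, Hf j (ψ y)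
        = ∑ i, Kmat φ (ψ y) a i * (Real.sqrt ((g (ψ y)).det) * L (ψ y) i j) := fun j => rfl
    calc (ε * m y * Real.sqrt ((g (ψ y)).det)) *
          ∑ i, ∑ j, Kmat φ (ψ y) a i * L (ψ y) i j * Kmat φ (ψ y) b j
        = ∑ i, ∑ j, ε * (m y * Kmat φ (ψ y) b j *
            (Kmat φ (ψ y) a i * (Real.sqrt ((g (ψ y)).det) * L (ψ y) i j))) := by
          rw [Finset.mul_sum]
          refine Finset.sum_congr rfl fun i _ => ?_
          rw [Finset.mul_sum]
          refine Finset.sum_congr rfl fun j _ => ?_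
          ring
      _ = ∑ j, ∑ i, ε * (m y * Kmat φ (ψ y) b j *
            (Kmat φ (ψ y) a i * (Real.sqrt ((g (ψ y)).det) * L (ψ y) i j))) := Finset.sum_comm
      _ = ε * ∑ j, (m y * Kmat φ (ψ y) b j) *
            ∑ i, Kmat φ (ψ y) a i * (Real.sqrt ((g (ψ y)).det) * L (ψ y) i j) := by
          symm
          rw [Finset.mul_sum]
          refine Finset.sum_congr rfl fun j _ => ?_
          rw [Finset.mul_sum, Finset.mul_sum]
      _ = ε * ∑ j, (m y * Kmat φ (ψ y) b j) * Hf j (ψ y) := by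
          refine congrArg _ (Finset.sum_congr rfl fun j _ => ?_)
          rw [hHfy j]
  rw [Finset.sum_congr rfl fun b (_ : b ∈ Finset.univ) => step1 b]
  -- Step 2: differentiate
  have hdiffprod : ∀ b j, DifferentiableAt ℝ
      (fun y => (m y * Kmat φ (ψ y) b j) * Hf j (ψ y)) y₀ :=
    fun b j => ((hdiffm.mul (hdiffc b j)).mul (hdiffHψ j))
  have step2 : ∀ b, pd (fun y => ε * ∑ j, (m y * Kmat φ (ψ y) b j) * Hf j (ψ y)) b y₀
      = ε * ∑ j, (pd (fun y => m y * Kmat φ (ψ y) b j) b y₀ * Hf j x₀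
          + (m y₀ * Kmat φ x₀ b j) * pd (fun y => Hf j (ψ y)) b y₀) := by
    intro b
    rw [pd_const_mul (DifferentiableAt.fun_sum fun j _ => hdiffprod b j) ε b]
    congr 1
    rw [pd_sum Finset.univ (fun j _ => hdiffprod b j) b]
    refine Finset.sum_congr rfl fun j _ => ?_
    rw [pd_mul (f := fun y => m y * Kmat φ (ψ y) b j) (hdiffm.mul (hdiffc b j)) (hdiffHψ j) b]
    rw [hψy₀]
  rw [Finset.sum_congr rfl fun b (_ : b ∈ Finset.univ) => step2 b]
  -- Step 3: chain rule for Hf j ∘ ψ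
  have step3 : ∀ j b, pd (fun y => Hf j (ψ y)) b y₀
      = ∑ k, Kmat ψ y₀ k b * pd (Hf j) k x₀ := by
    intro j b
    have houter : DifferentiableAt ℝ (Hf j) (ψ y₀) := by rw [hψy₀]; exact hdiffH j
    have := pd_comp (f := Hf j) houter hdiffψat b
    rw [this]
    refine Finset.sum_congr rfl fun k _ => ?_
    rw [hψy₀]
    rfl
  -- Step 4: total sum equals ε * m y₀ * ∑ j, pd (Hf j) j x₀
  have step4 : ∑ b, (ε * ∑ j, (pd (fun y => m y * Kmat φ (ψ y) b j) b y₀ * Hf j x₀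
          + (m y₀ * Kmat φ x₀ b j) * pd (fun y => Hf j (ψ y)) b y₀))
      = ε * (m y₀ * ∑ j, pd (Hf j) j x₀) := by
    rw [← Finset.mul_sum]
    congr 1
    have hsplit : ∀ b, ∑ j, (pd (fun y => m y * Kmat φ (ψ y) b j) b y₀ * Hf j x₀
          + (m y₀ * Kmat φ x₀ b j) * pd (fun y => Hf j (ψ y)) b y₀)
        = (∑ j, pd (fun y => m y * Kmat φ (ψ y) b j) b y₀ * Hf j x₀)
          + ∑ j, (m y₀ * Kmat φ x₀ b j) * pd (fun y => Hf j (ψ y)) b y₀ :=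
      fun b => Finset.sum_add_distrib
    rw [Finset.sum_congr rfl fun b (_ : b ∈ Finset.univ) => hsplit b]
    rw [Finset.sum_add_distrib]
    have hA : ∑ b, ∑ j, pd (fun y => m y * Kmat φ (ψ y) b j) b y₀ * Hf j x₀ = 0 := by
      rw [Finset.sum_comm]
      rw [Finset.sum_congr rfl fun j (_ : j ∈ Finset.univ) =>
        (Finset.sum_mul Finset.univ _ (Hf j x₀)).symm]
      rw [Finset.sum_congr rfl fun j (_ : j ∈ Finset.univ) => by
        rw [piola hV hU hψU hφV hφψ hψφ hφ hψ hyV j, zero_mul]]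
      simp
    have hB : ∑ b, ∑ j, (m y₀ * Kmat φ x₀ b j) * pd (fun y => Hf j (ψ y)) b y₀
        = m y₀ * ∑ j, pd (Hf j) j x₀ := by
      rw [Finset.sum_congr rfl fun b (_ : b ∈ Finset.univ) =>
        Finset.sum_congr rfl fun j (_ : j ∈ Finset.univ) => by rw [step3 j b]]
      rw [Finset.sum_comm]
      rw [Finset.mul_sum]
      refine Finset.sum_congr rfl fun j _ => ?_
      calc ∑ b, (m y₀ * Kmat φ x₀ b j) * ∑ k, Kmat ψ y₀ k b * pd (Hf j) k x₀
          = ∑ b, ∑ k, m y₀ * (Kmat ψ y₀ k b * Kmat φ x₀ b j * pd (Hf j) k x₀) := by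
            refine Finset.sum_congr rfl fun b _ => ?_
            rw [Finset.mul_sum]
            exact Finset.sum_congr rfl fun k _ => by ring
        _ = ∑ k, ∑ b, m y₀ * (Kmat ψ y₀ k b * Kmat φ x₀ b j * pd (Hf j) k x₀) :=
            Finset.sum_comm
        _ = ∑ k, m y₀ * ((if k = j then (1:ℝ) else 0) * pd (Hf j) k x₀) := by
            refine Finset.sum_congr rfl fun k _ => ?_
            have h3 : ∑ b, Kmat ψ y₀ k b * Kmat φ x₀ b j = if k = j then (1:ℝ) else 0 := by
              have h4 := congrArg (fun A => A k j) hKJ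
              simpa [Matrix.mul_apply, Matrix.one_apply] using h4
            rw [← Finset.mul_sum, ← Finset.sum_mul, h3]
        _ = m y₀ * pd (Hf j) j x₀ := by
            rw [← Finset.mul_sum]
            congr 1
            exact sum_delta_mul j _
    rw [hA, hB, zero_add]
  rw [step4]
  -- Step 5: prefactor simplification
  have hsq0 : Real.sqrt (metricP d ψ g y₀).det = ε * m y₀ * Real.sqrt ((g x₀).det) := by
    have := hsq y₀ hyV hεm
    rwa [hψy₀] at this
  rw [hsq0]
  have hsg : 0 < Real.sqrt ((g x₀).det) := Real.sqrt_pos.mpr (hdgpos x₀ hx)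
  have hlhs : (ε * m y₀ * Real.sqrt ((g x₀).det))⁻¹ * (ε * (m y₀ * ∑ j, pd (Hf j) j x₀))
      = (Real.sqrt ((g x₀).det))⁻¹ * ∑ j, pd (Hf j) j x₀ := by
    field_simp
    rcases hεcases with h | h <;> rw [h] <;> ring
  rw [hlhs]
  -- Step 6: expand pd (Hf j) j and conclude
  have step6 : ∀ j, pd (Hf j) j x₀
      = ∑ i, (pd2 (fun z => φ z a) j i x₀ * (Real.sqrt ((g x₀).det) * L x₀ i j)
          + Kmat φ x₀ a i * pd (fun z => Real.sqrt ((g z).det) * L z i j) j x₀) := by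
    intro j
    have hdterm : ∀ i, DifferentiableAt ℝ
        (fun x => Kmat φ x a i * (Real.sqrt ((g x).det) * L x i j)) x₀ :=
      fun i => (hdentφ a i hx).mul
        ((hdiffsqrtg x₀ hx).mul (diffAt_of_contDiffOn hU (hLC1 i j) le_rfl hx))
    rw [hHfdef]
    rw [pd_sum Finset.univ (fun i _ => hdterm i) j]
    refine Finset.sum_congr rfl fun i _ => ?_
    rw [pd_mul (show DifferentiableAt ℝ (fun x => Kmat φ x a i) x₀ from hdentφ a i hx)
      (show DifferentiableAt ℝ (fun x => Real.sqrt ((g x).det) * L x i j) x₀ from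
        (hdiffsqrtg x₀ hx).mul (diffAt_of_contDiffOn hU (hLC1 i j) le_rfl hx)) j]
    rfl
  rw [Finset.sum_congr rfl fun j (_ : j ∈ Finset.univ) => step6 j]
  -- split the double sum
  rw [Finset.sum_congr rfl fun j (_ : j ∈ Finset.univ) =>
    (Finset.sum_add_distrib (s := Finset.univ))]
  rw [Finset.sum_add_distrib, mul_add]
  have hφsym : ∀ i j, pd2 (fun z => φ z a) i j x₀ = pd2 (fun z => φ z a) j i x₀ := by
    intro i j
    refine pd2_symm ?_ i j
    exact ((contDiffOn_comp_component hφ a).contDiffAt (hU.mem_nhds hx)).of_le (by norm_num)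
  have hterm2 : (Real.sqrt ((g x₀).det))⁻¹ *
        ∑ j, ∑ i, Kmat φ x₀ a i * pd (fun z => Real.sqrt ((g z).det) * L z i j) j x₀
      = ∑ i, pd (fun z => φ z a) i x₀ *
          ((Real.sqrt ((g x₀).det))⁻¹ * ∑ j, pd (fun z => Real.sqrt ((g z).det) * L z i j) j x₀) := by
    rw [Finset.sum_comm, Finset.mul_sum]
    refine Finset.sum_congr rfl fun i _ => ?_
    rw [Finset.mul_sum, Finset.mul_sum]
    rw [show Kmat φ x₀ a i = pd (fun z => φ z a) i x₀ from rfl]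
    rw [Finset.mul_sum]
    refine Finset.sum_congr rfl fun j _ => ?_
    ring
  have hterm1 : (Real.sqrt ((g x₀).det))⁻¹ *
        ∑ j, ∑ i, pd2 (fun z => φ z a) j i x₀ * (Real.sqrt ((g x₀).det) * L x₀ i j)
      = ∑ i, ∑ j, pd2 (fun z => φ z a) i j x₀ * ((L x₀ i j + L x₀ j i) / 2) := by
    have e1 : (Real.sqrt ((g x₀).det))⁻¹ *
          ∑ j, ∑ i, pd2 (fun z => φ z a) j i x₀ * (Real.sqrt ((g x₀).det) * L x₀ i j)
        = ∑ j, ∑ i, pd2 (fun z => φ z a) j i x₀ * L x₀ i j := by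
      rw [Finset.mul_sum]
      refine Finset.sum_congr rfl fun j _ => ?_
      rw [Finset.mul_sum]
      refine Finset.sum_congr rfl fun i _ => ?_
      field_simp
    rw [e1]
    -- A := ∑ j ∑ i pd2 (j i) * L i j ; show A = ∑ i ∑ j pd2 (i j) * (L i j + L j i)/2
    have hX1 : ∑ j, ∑ i, pd2 (fun z => φ z a) j i x₀ * L x₀ i j
        = ∑ i, ∑ j, pd2 (fun z => φ z a) i j x₀ * L x₀ i j := by
      rw [Finset.sum_comm]
      exact Finset.sum_congr rfl fun i _ => Finset.sum_congr rfl fun j _ => by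
        rw [hφsym i j]
    have hX2 : ∑ j, ∑ i, pd2 (fun z => φ z a) j i x₀ * L x₀ i j
        = ∑ i, ∑ j, pd2 (fun z => φ z a) i j x₀ * L x₀ j i := rfl
    have : ∑ i, ∑ j, pd2 (fun z => φ z a) i j x₀ * ((L x₀ i j + L x₀ j i) / 2)
        = (∑ i, ∑ j, pd2 (fun z => φ z a) i j x₀ * L x₀ i j) / 2
          + (∑ i, ∑ j, pd2 (fun z => φ z a) i j x₀ * L x₀ j i) / 2 := by
      rw [Finset.sum_div, Finset.sum_div, ← Finset.sum_add_distrib]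
      refine Finset.sum_congr rfl fun i _ => ?_
      rw [Finset.sum_div, Finset.sum_div, ← Finset.sum_add_distrib]
      refine Finset.sum_congr rfl fun j _ => ?_
      ring
    rw [this, ← hX1, ← hX2]
    ring
  rw [hterm1, hterm2]
  rw [add_comm]
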